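/- Let 1 ≤ p < ∞ and U, V ∈ ℝ with U·V ≤ 0. Define g(t) = |U − tV|^p + |U − V|^{p−2}(U − V)V·|t|^p for t ∈ ℝ (with the convention |0|^{p−2}·0 = 0). Then g(t) ≤ g(1) = |U − V|^{p−2}(U − V)U for all t ∈ ℝ. -/

import Mathlib

open MeasureTheory Real Set Filter Topology

noncomputable section

/-- Points of `ℝ^n`. -/
abbrev Pt (n : ℕ) := EuclideanSpace ℝ (Fin n)

/-- The normalizing constant `Λ_{n,p} = p Γ((n+p)/2) / (2 π^{(n-1)/2} Γ((p+1)/2))`. -/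
def Lam (n : ℕ) (p : ℝ) : ℝ :=
  p * Real.Gamma (((n : ℝ) + p) / 2) /
    (2 * Real.pi ^ (((n : ℝ) - 1) / 2) * Real.Gamma ((p + 1) / 2))

variable {n : ℕ}

/-- `Q = ℝ^{2n} \ (Ω^c × Ω^c)`. -/
def Qset (Ω : Set (Pt n)) : Set (Pt n × Pt n) := (Ωᶜ ×ˢ Ωᶜ)ᶜ

/-- The singular kernel `|x - y|^{-(n + pα)}`. -/
def kern (p α : ℝ) (z : Pt n × Pt n) : ℝ := ‖z.1 - z.2‖ ^ (-((n : ℝ) + p * α))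

/-- The `p`-th power of the Gagliardo-type seminorm, `[u]_{α,p}^p`. -/
def gagP (p α : ℝ) (Ω : Set (Pt n)) (u : Pt n → ℝ) : ℝ :=
  ∫ z in Qset Ω, |u z.1 - u z.2| ^ p * kern p α z

/-- The nonlinear form `H_{α,p}(u,v)`. -/
def Hform (p α : ℝ) (Ω : Set (Pt n)) (u v : Pt n → ℝ) : ℝ :=
  ∫ z in Qset Ω,
    |u z.1 - u z.2| ^ (p - 2) * (u z.1 - u z.2) * (v z.1 - v z.2) * kern p α z

/-- `∫_Ω |u|^p`. -/
def lpP (p : ℝ) (Ω : Set (Pt n)) (u : Pt n → ℝ) : ℝ := ∫ x in Ω, |u x| ^ p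

/-- Membership in the space `W^{α,p}`: measurable with finite norm `‖u‖_{α,p}`. -/
def memW (p α : ℝ) (Ω : Set (Pt n)) (u : Pt n → ℝ) : Prop :=
  Measurable u ∧
    ((∫⁻ x in Ω, ENNReal.ofReal (|u x| ^ p)) +
      ∫⁻ z in Qset Ω, ENNReal.ofReal (|u z.1 - u z.2| ^ p * kern p α z)) < ⊤

/-- The norm `‖u‖_{α,p} = (‖u‖_{L^p(Ω)}^p + [u]_{α,p}^p)^{1/p}`. -/
def normW (p α : ℝ) (Ω : Set (Pt n)) (u : Pt n → ℝ) : ℝ :=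
  (lpP p Ω u + gagP p α Ω u) ^ (1 / p)

/-- `Ω_ε = {x ∈ Ω : dist(x, ∂Ω) ≤ ε}`. -/
def Oeps (Ω : Set (Pt n)) (ε : ℝ) : Set (Pt n) :=
  {x ∈ Ω | Metric.infDist x (frontier Ω) ≤ ε}

/-- The energy `Λ_{n,p}(1-α)[u]_{α,p}^p + ∫_Ω |u|^p`. -/
def energy (p α : ℝ) (Ω : Set (Pt n)) (u : Pt n → ℝ) : ℝ :=
  Lam n p * (1 - α) * gagP p α Ω u + lpP p Ω u

/-- The constraint sphere `S = {u ∈ W^{α,p} : (1/ε)∫_{Ω_ε}|u|^p = 1}`. -/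
def sphereS (p α ε : ℝ) (Ω : Set (Pt n)) (u : Pt n → ℝ) : Prop :=
  memW p α Ω u ∧ (1 / ε) * ∫ x in Oeps Ω ε, |u x| ^ p = 1

/-- The first eigenvalue `λ_{1,ε}`. -/
def lam1 (p α ε : ℝ) (Ω : Set (Pt n)) : ℝ :=
  sInf {r | ∃ u, sphereS p α ε Ω u ∧ r = energy p α Ω u}

/-- Positive part `u⁺`. -/
def pPart (u : Pt n → ℝ) (x : Pt n) : ℝ := max (u x) 0

/-- Negative part `u⁻`. -/
def nPart (u : Pt n → ℝ) (x : Pt n) : ℝ := max (-u x) 0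

/-- The functional `J_s`. -/
def Jfun (p α ε s : ℝ) (Ω : Set (Pt n)) (u : Pt n → ℝ) : ℝ :=
  energy p α Ω u - (s / ε) * ∫ x in Oeps Ω ε, pPart u x ^ p

/-- Weak solution of the Fučik problem `(F_p)` with parameters `(a,b)`. -/
def isWeakSol (p α ε a b : ℝ) (Ω : Set (Pt n)) (u : Pt n → ℝ) : Prop :=
  memW p α Ω u ∧ ∀ v, memW p α Ω v →
    Lam n p * (1 - α) * Hform p α Ω u v + (∫ x in Ω, |u x| ^ (p - 2) * u x * v x)
      = (a / ε) * (∫ x in Oeps Ω ε, pPart u x ^ (p - 1) * v x)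
        - (b / ε) * ∫ x in Oeps Ω ε, nPart u x ^ (p - 1) * v x

/-- The Fučik spectrum `Σ_p`. -/
def SigmaP (p α ε : ℝ) (Ω : Set (Pt n)) : Set (ℝ × ℝ) :=
  {ab | ∃ u : Pt n → ℝ, isWeakSol p α ε ab.1 ab.2 Ω u ∧ ¬ (∀ᵐ x : Pt n, u x = 0)}

/-- Continuity of a path `γ : [-1,1] → W^{α,p}` with respect to `‖·‖_{α,p}`. -/
def contPathW (p α : ℝ) (Ω : Set (Pt n)) (γ : ℝ → Pt n → ℝ) : Prop :=
  ∀ t ∈ Icc (-1 : ℝ) 1, ∀ δ > (0 : ℝ), ∃ η > (0 : ℝ), ∀ t' ∈ Icc (-1 : ℝ) 1,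
    |t' - t| < η → normW p α Ω (γ t' - γ t) < δ

/-- The family of paths `Γ` on `S` joining `-φ₁` to `φ₁`. -/
def GammaSet (p α ε : ℝ) (Ω : Set (Pt n)) (φ : Pt n → ℝ) : Set (ℝ → Pt n → ℝ) :=
  {γ | (∀ t ∈ Icc (-1 : ℝ) 1, sphereS p α ε Ω (γ t)) ∧ contPathW p α Ω γ ∧
    γ (-1) = -φ ∧ γ 1 = φ}

/-- The minimax value `c(s)`. -/
def cval (p α ε : ℝ) (Ω : Set (Pt n)) (φ : Pt n → ℝ) (s : ℝ) : ℝ :=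
  sInf {r | ∃ γ ∈ GammaSet p α ε Ω φ,
    r = sSup ((fun t => Jfun p α ε s Ω (γ t)) '' Icc (-1 : ℝ) 1)}

/-- Topology on functions generated by the balls of the seminorm `‖·‖_{α,p}`. -/
def topW (p α : ℝ) (Ω : Set (Pt n)) : TopologicalSpace (Pt n → ℝ) :=
  TopologicalSpace.generateFrom
    {B | ∃ (u : Pt n → ℝ) (r : ℝ), B = {v | normW p α Ω (v - u) < r}}

/-- First eigenvalue with constraint on a subregion `D`. -/
def lam1On (p α ε : ℝ) (Ω D : Set (Pt n)) : ℝ :=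
  sInf {r | ∃ u, memW p α Ω u ∧ (1 / ε) * (∫ x in D, |u x| ^ p) = 1 ∧
    r = energy p α Ω u}

/-- Primitive `F(x,s) = ∫_0^s f(x,t) dt`. -/
def Ffun (f : Pt n → ℝ → ℝ) (x : Pt n) (s : ℝ) : ℝ := ∫ t in (0:ℝ)..s, f x t

/-- The energy functional `Ψ` of the nonresonance problem (`p = 2`). -/
def Psi (α ε : ℝ) (Ω : Set (Pt n)) (f : Pt n → ℝ → ℝ) (u : Pt n → ℝ) : ℝ :=
  Lam n 2 * (1 - α) / 2 * gagP 2 α Ω u + (1 / 2) * lpP 2 Ω u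
    - (1 / ε) * ∫ x in Oeps Ω ε, Ffun f x (u x)

lemma key_ineq (p a b s : ℝ) (hp : 1 ≤ p) (ha : 0 ≤ a) (hb : 0 ≤ b) (hs : 0 ≤ s) :
    (a + s * b) ^ p ≤ (a + b) ^ (p - 1) * (a + b * s ^ p) := by
  rcases eq_or_lt_of_le (by positivity : (0:ℝ) ≤ a + b) with h | h
  · have ha0 : a = 0 := by linarith
    have hb0 : b = 0 := by linarith
    subst ha0; subst hb0
    simp [Real.zero_rpow (by linarith : p ≠ 0)]
  · have hc : a + b ≠ 0 := ne_of_gt h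
    have hconv := (convexOn_rpow hp).2 (mem_Ici.2 (zero_le_one)) (mem_Ici.2 hs)
      (div_nonneg ha h.le) (div_nonneg hb h.le) (by field_simp)
    simp only [smul_eq_mul, mul_one, Real.one_rpow] at hconv
    have hnum : 0 ≤ a + s * b := by positivity
    have h1 : a / (a + b) + b / (a + b) * s = (a + s * b) / (a + b) := by
      field_simp
    rw [h1] at hconv
    have h2 := mul_le_mul_of_nonneg_left hconv (by positivity : (0:ℝ) ≤ (a + b) ^ p)
    calc (a + s * b) ^ p = ((a + b) * ((a + s * b) / (a + b))) ^ p := by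
          rw [mul_div_cancel₀ _ hc]
      _ = (a + b) ^ p * ((a + s * b) / (a + b)) ^ p := by
          rw [Real.mul_rpow h.le (by positivity)]
      _ ≤ (a + b) ^ p * (a / (a + b) + b / (a + b) * s ^ p) := h2
      _ = (a + b) ^ (p - 1) * (a + b * s ^ p) := by
          rw [show p = (p - 1) + 1 by ring, Real.rpow_add_one hc]
          field_simp; ring

lemma main_ineq (p U V : ℝ) (hp : 1 ≤ p) (hU : 0 ≤ U) (hV : V ≤ 0) (t : ℝ) :
    |U - t * V| ^ p + |U - V| ^ (p - 2) * (U - V) * V * |t| ^ p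
      ≤ |U - V| ^ (p - 2) * (U - V) * U := by
  have hW : 0 ≤ U - V := by linarith
  rcases eq_or_lt_of_le hW with h0 | h0
  · have hU0 : U = 0 := by linarith
    have hV0 : V = 0 := by linarith
    subst hU0; subst hV0
    simp [Real.zero_rpow (by linarith : p ≠ 0)]
  · have hWne : U - V ≠ 0 := ne_of_gt h0
    have habs : |U - V| = U - V := abs_of_pos h0
    have hpow : |U - V| ^ (p - 2) * (U - V) = (U - V) ^ (p - 1) := by
      rw [habs, show p - 1 = (p - 2) + 1 by ring, Real.rpow_add_one hWne]
    have key := key_ineq p U (-V) |t| hp hU (by linarith) (abs_nonneg t)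
    have htri : |U - t * V| ≤ U + |t| * -V := by
      calc |U - t * V| ≤ |U| + |t * V| := abs_sub _ _
        _ = U + |t| * -V := by
            rw [abs_of_nonneg hU, abs_mul, abs_of_nonpos hV]
    have hmono : |U - t * V| ^ p ≤ (U + |t| * -V) ^ p :=
      Real.rpow_le_rpow (abs_nonneg _) htri (by linarith)
    rw [show U + -V = U - V from by ring] at key
    rw [hpow]
    have hfin : (U - V) ^ (p - 1) * (U + -V * |t| ^ p)
        = (U - V) ^ (p - 1) * U - (U - V) ^ (p - 1) * V * |t| ^ p := by ring
    linarith [hmono, key, hfin.ge, hfin.le]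

lemma eq_part (p U V : ℝ) (hp : 1 ≤ p) :
    |U - 1 * V| ^ p + |U - V| ^ (p - 2) * (U - V) * V * |(1 : ℝ)| ^ p
      = |U - V| ^ (p - 2) * (U - V) * U := by
  rw [one_mul, abs_one, Real.one_rpow, mul_one]
  rcases eq_or_ne (U - V) 0 with h | h
  · rw [h]
    simp [Real.zero_rpow (by linarith : p ≠ 0)]
  · have habs : |U - V| ≠ 0 := abs_ne_zero.2 h
    have hsq : |U - V| ^ (p - 2) * (U - V) * (U - V) = |U - V| ^ p := by
      rw [show p = (p - 2) + 2 by ring, Real.rpow_add (abs_pos.2 h),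
        show ((p - 2) + 2) - 2 = p - 2 by ring]
      rw [show (2:ℝ) = ((2:ℕ):ℝ) by norm_num, Real.rpow_natCast, sq_abs]
      ring
    linarith [hsq]

/-- for `1 ≤ p` and `U·V ≤ 0`, the function
`g(t) = |U - tV|^p + |U - V|^{p-2}(U - V)V|t|^p` satisfies
`g(t) ≤ g(1) = |U - V|^{p-2}(U - V)U` for all `t`. -/
theorem stmt_18 (p U V : ℝ) (hp : 1 ≤ p) (hUV : U * V ≤ 0) :
    (∀ t : ℝ,
      |U - t * V| ^ p + |U - V| ^ (p - 2) * (U - V) * V * |t| ^ p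
        ≤ |U - V| ^ (p - 2) * (U - V) * U) ∧
    |U - 1 * V| ^ p + |U - V| ^ (p - 2) * (U - V) * V * |(1 : ℝ)| ^ p
      = |U - V| ^ (p - 2) * (U - V) * U := by
  refine ⟨fun t => ?_, eq_part p U V hp⟩
  rcases mul_nonpos_iff.1 hUV with ⟨hU, hV⟩ | ⟨hU, hV⟩
  · exact main_ineq p U V hp hU hV t
  · have h := main_ineq p (-U) (-V) hp (by linarith) (by linarith) t
    have e1 : |(-U) - t * (-V)| = |U - t * V| := by
      rw [show (-U) - t * (-V) = -(U - t * V) by ring, abs_neg]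
    have e2 : |(-U) - (-V)| = |U - V| := by
      rw [show (-U) - (-V) = -(U - V) by ring, abs_neg]
    rw [e1, e2] at h
    calc |U - t * V| ^ p + |U - V| ^ (p - 2) * (U - V) * V * |t| ^ p
        = |U - t * V| ^ p + |U - V| ^ (p - 2) * (-U - -V) * (-V) * |t| ^ p := by ring
      _ ≤ |U - V| ^ (p - 2) * (-U - -V) * (-U) := h
      _ = |U - V| ^ (p - 2) * (U - V) * U := by ring
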